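/- For f : ℝ^{m×n} → ℝ ∪ {+∞} bounded below, the function φ(X) := inf {∫ f dμ : μ a probability measure with ∫ p dμ = p(X)} satisfies φ(X) ≤ f(X) for every X, and φ ≥ h for every polyconvex function h with h ≤ f. In particular φ equals the polyconvex envelope of f. -/

import Mathlib

open MeasureTheory ENNReal

/-- Index type for the minors of an `m × n` matrix: pairs of row/column subsets
of equal cardinality (the empty pair giving the constant minor 1). -/
abbrev MinorIdx (m n : ℕ) : Type :=
  {st : Finset (Fin m) × Finset (Fin n) // st.1.card = st.2.card}

/-- The vector of all minors of a matrix, indexed by `MinorIdx m n`. -/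
noncomputable def minors {m n : ℕ} (X : Matrix (Fin m) (Fin n) ℝ) (ι : MinorIdx m n) : ℝ :=
  (X.submatrix (ι.val.1.orderEmbOfFin rfl) (ι.val.2.orderEmbOfFin ι.property.symm)).det

instance matMS (m n : ℕ) : MeasurableSpace (Matrix (Fin m) (Fin n) ℝ) :=
  inferInstanceAs (MeasurableSpace (Fin m → Fin n → ℝ))

/-- `EReal` to `ℝ≥0∞`, sending `⊤` to `⊤` and negatives to `0`. -/
noncomputable def er2e (x : EReal) : ℝ≥0∞ :=
  if x = ⊤ then ⊤ else ENNReal.ofReal x.toReal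

/-- Integral of an `ℝ ∪ {+∞}`-valued function `f` bounded below by `c`
against a (probability) measure `μ`; equals `+∞` if `f` is not `μ`-integrable. -/
noncomputable def intE {m n : ℕ} (f : Matrix (Fin m) (Fin n) ℝ → EReal) (c : ℝ)
    (μ : Measure (Matrix (Fin m) (Fin n) ℝ)) : EReal :=
  (((∫⁻ Z, er2e (f Z - (c : EReal)) ∂μ) : ℝ≥0∞) : EReal) + (c : EReal)

/-- The polyconvexification functional
`ψ(q) = inf {∫ f dμ : μ probability measure, ∫ p dμ = q}`. -/
noncomputable def psiF {m n : ℕ} (f : Matrix (Fin m) (Fin n) ℝ → EReal) (c : ℝ)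
    (q : MinorIdx m n → ℝ) : EReal :=
  sInf {v : EReal | ∃ μ : Measure (Matrix (Fin m) (Fin n) ℝ),
    IsProbabilityMeasure μ ∧
    (∀ ι, Integrable (fun Z => minors Z ι) μ) ∧
    (∀ ι, (∫ Z, minors Z ι ∂μ) = q ι) ∧
    v = intE f c μ}

section Aux

open Module

lemma minors_measurable {m n : ℕ} (ι : MinorIdx m n) :
    Measurable (fun Z : Matrix (Fin m) (Fin n) ℝ => minors Z ι) := by
  unfold minors
  rw [show (fun Z : Matrix (Fin m) (Fin n) ℝ => (Z.submatrix (ι.val.1.orderEmbOfFin rfl)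
      (ι.val.2.orderEmbOfFin ι.property.symm)).det) = _ from funext fun Z => Matrix.det_apply' _]
  apply Finset.measurable_sum
  intro σ _
  apply Measurable.const_mul
  apply Finset.measurable_prod
  intro i _
  simp only [Matrix.submatrix_apply]
  exact (measurable_pi_apply _).comp (measurable_pi_apply _)

lemma ps0 (d : ℕ) : ∀ (F : Type) [NormedAddCommGroup F] [inst2 : NormedSpace ℝ F]
    [inst3 : FiniteDimensional ℝ F],
    finrank ℝ F ≤ d → ∀ (s : Set F), Convex ℝ s → s.Nonempty → (0:F) ∉ s →
    ∃ ψ : F →L[ℝ] ℝ, (∀ y ∈ s, ψ y ≤ 0) ∧ ∃ y ∈ s, ψ y < 0 := by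
  induction d with
  | zero =>
    intro F _ _ _ hr s hs hne h0
    have : Subsingleton F := finrank_zero_iff.mp (Nat.le_zero.mp hr)
    obtain ⟨y, hy⟩ := hne
    exact absurd (Subsingleton.elim y 0 ▸ hy) h0
  | succ d ih =>
    intro F _ _ _ hr s hs hne h0
    by_cases hcl : (0:F) ∈ closure s
    · by_cases hW : Submodule.span ℝ s = ⊤
      · have haff : affineSpan ℝ s = ⊤ := by
          have hA : (0:F) ∈ affineSpan ℝ s := by
            have hclosed : IsClosed (affineSpan ℝ s : Set F) :=
              (affineSpan ℝ s).closed_of_finiteDimensional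
            have := closure_mono (subset_affineSpan ℝ s)
            rw [hclosed.closure_eq] at this
            exact this hcl
          have hsub : s ⊆ (affineSpan ℝ s).direction := by
            intro x hx
            have := AffineSubspace.vsub_mem_direction (subset_affineSpan ℝ s hx) hA
            simpa using this
          have hdir : (affineSpan ℝ s).direction = ⊤ := by
            rw [eq_top_iff, ← hW, Submodule.span_le]
            exact hsub
          rw [← AffineSubspace.direction_eq_top_iff_of_nonempty ⟨0, hA⟩]
          exact hdir
        obtain ⟨y₀, hy₀⟩ := hs.interior_nonempty_iff_affineSpan_eq_top.mpr haff
        obtain ⟨ψ, hψ⟩ := geometric_hahn_banach_open_point hs.interior isOpen_interior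
          (fun hmem => h0 (interior_subset hmem))
        simp only [map_zero] at hψ
        refine ⟨ψ, ?_, y₀, interior_subset hy₀, hψ y₀ hy₀⟩
        intro y hy
        by_contra hpos
        push_neg at hpos
        set a := ψ y with ha
        set b := ψ y₀ with hb
        have hbneg : b < 0 := hψ y₀ hy₀
        have hlam : 0 < a / (a - b) := div_pos hpos (by linarith)
        have hlam1 : 0 ≤ 1 - a / (a - b) := by
          rw [sub_nonneg, div_le_one (by linarith)]
          linarith
        have hz := hs.combo_interior_self_mem_interior hy₀ hy hlam hlam1 (by ring)
        have := hψ _ hz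
        rw [map_add, _root_.map_smul, _root_.map_smul] at this
        simp only [smul_eq_mul] at this
        rw [← hb, ← ha] at this
        have hab : a - b ≠ 0 := by intro h; rw [h] at hlam; simp at hlam
        have : a / (a - b) * b + (1 - a / (a - b)) * a = 0 := by
          field_simp
          ring
        linarith [hψ _ hz, this]
      · set W := Submodule.span ℝ s with hWdef
        have hsW : s ⊆ (W : Set F) := Submodule.subset_span
        set s' : Set ↥W := (W.subtype) ⁻¹' s with hs'def
        have hconv' : Convex ℝ s' := hs.linear_preimage W.subtype
        obtain ⟨y, hy⟩ := hne
        have hne' : s'.Nonempty := ⟨⟨y, hsW hy⟩, hy⟩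
        have h0' : (0 : ↥W) ∉ s' := by
          intro hmem
          exact h0 (by simpa [hs'def] using hmem)
        have hrank : finrank ℝ ↥W ≤ d := by
          have := Submodule.finrank_lt (s := W) hW
          omega
        obtain ⟨ψ₀, hψ₀, y₁, hy₁, hy₁'⟩ := ih ↥W hrank s' hconv' hne' h0'
        obtain ⟨ψ, hext, -⟩ := exists_extension_norm_eq W ψ₀
        refine ⟨ψ, ?_, ↑y₁, hy₁, by rw [hext y₁]; exact hy₁'⟩
        intro z hz
        have : ψ (⟨z, hsW hz⟩ : ↥W) = ψ₀ ⟨z, hsW hz⟩ := hext _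
        rw [this]
        exact hψ₀ _ hz
    · obtain ⟨ψ, u, hlt, hu⟩ := geometric_hahn_banach_closed_point hs.closure isClosed_closure hcl
      simp only [map_zero] at hu
      obtain ⟨y, hy⟩ := hne
      exact ⟨ψ, fun z hz => le_of_lt (lt_trans (hlt z (subset_closure hz)) hu),
        y, hy, lt_trans (hlt y (subset_closure hy)) hu⟩

lemma er2e_coe (x : ℝ) : er2e (x : EReal) = ENNReal.ofReal x := by
  rw [er2e, if_neg (EReal.coe_ne_top x), EReal.toReal_coe]

lemma er2e_top : er2e ⊤ = ⊤ := if_pos rfl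

lemma intE_ge {m n : ℕ} (f : Matrix (Fin m) (Fin n) ℝ → EReal) (c : ℝ)
    (μ : Measure (Matrix (Fin m) (Fin n) ℝ)) : (c : EReal) ≤ intE f c μ := by
  rw [intE]
  calc (c : EReal) = 0 + c := (zero_add _).symm
  _ ≤ _ := add_le_add_left (EReal.coe_ennreal_nonneg _) _

lemma intE_top {m n : ℕ} (f : Matrix (Fin m) (Fin n) ℝ → EReal) (c : ℝ)
    (μ : Measure (Matrix (Fin m) (Fin n) ℝ)) {A : Set (Matrix (Fin m) (Fin n) ℝ)}
    (hA : MeasurableSet A) (hμA : μ A ≠ 0) (hf : ∀ Z ∈ A, f Z = ⊤) : intE f c μ = ⊤ := by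
  have h1 : ∫⁻ Z, er2e (f Z - (c : EReal)) ∂μ = ⊤ := by
    refine le_antisymm le_top ?_
    have hle : ∀ Z, A.indicator (fun _ => (⊤ : ℝ≥0∞)) Z ≤ er2e (f Z - (c : EReal)) := by
      intro Z
      by_cases hZ : Z ∈ A
      · rw [Set.indicator_of_mem hZ, hf Z hZ, EReal.top_sub_coe, er2e_top]
      · rw [Set.indicator_of_notMem hZ]; exact zero_le
    calc (⊤ : ℝ≥0∞) = ⊤ * μ A := (ENNReal.top_mul hμA).symm
    _ = ∫⁻ Z, A.indicator (fun _ => (⊤ : ℝ≥0∞)) Z ∂μ := (lintegral_indicator_const hA ⊤).symm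
    _ ≤ _ := lintegral_mono hle
  rw [intE, h1, EReal.coe_ennreal_top, EReal.top_add_coe]

lemma aff_bound {m n : ℕ} (μ : Measure (Matrix (Fin m) (Fin n) ℝ)) [IsProbabilityMeasure μ]
    (f : Matrix (Fin m) (Fin n) ℝ → EReal) (c : ℝ)
    (hfc : ∀ Z, (c : EReal) ≤ f Z) (w : Matrix (Fin m) (Fin n) ℝ → ℝ) (hw : Integrable w μ)
    (hwf : ∀ Z, ((w Z : ℝ) : EReal) ≤ f Z) :
    ((∫ Z, w Z ∂μ : ℝ) : EReal) ≤ intE f c μ := by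
  set v : Matrix (Fin m) (Fin n) ℝ → ℝ := fun Z => max (w Z - c) 0 with hvdef
  have hv : Integrable v μ := (hw.sub (integrable_const c)).pos_part
  have hvnn : 0 ≤ᵐ[μ] v := Filter.Eventually.of_forall fun Z => le_max_right _ _
  have hpt : ∀ Z, ENNReal.ofReal (v Z) ≤ er2e (f Z - (c : EReal)) := by
    intro Z
    have h1 := hfc Z
    have h2 := hwf Z
    generalize hfz : f Z = t at h1 h2 ⊢
    induction t using EReal.rec with
    | bot => exact absurd h1 (by simp)
    | top => rw [EReal.top_sub_coe, er2e_top]; exact le_top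
    | coe x =>
      have hwx : w Z ≤ x := EReal.coe_le_coe_iff.mp h2
      rw [show (x : EReal) - (c : EReal) = ((x - c : ℝ) : EReal) from (EReal.coe_sub x c).symm,
        er2e_coe]
      rcases le_or_gt (w Z - c) 0 with h | h
      · rw [hvdef]; simp only [max_eq_right h]
        simp
      · rw [hvdef]; simp only [max_eq_left h.le]
        exact ENNReal.ofReal_le_ofReal (by linarith)
  have h1 : ENNReal.ofReal (∫ Z, v Z ∂μ) = ∫⁻ Z, ENNReal.ofReal (v Z) ∂μ :=
    ofReal_integral_eq_lintegral_ofReal hv hvnn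
  have h2 : (∫ Z, v Z ∂μ) ≥ ∫ Z, w Z ∂μ - c := by
    have : ∫ Z, (w Z - c) ∂μ = ∫ Z, w Z ∂μ - c := by
      rw [integral_sub hw (integrable_const c), integral_const, probReal_univ]
      simp
    rw [← this]
    exact integral_mono (hw.sub (integrable_const c)) hv fun Z => le_max_left _ _
  calc ((∫ Z, w Z ∂μ : ℝ) : EReal) = ((∫ Z, w Z ∂μ - c : ℝ) : EReal) + (c : EReal) := by
        rw [← EReal.coe_add]; norm_num
  _ ≤ ((∫ Z, v Z ∂μ : ℝ) : EReal) + (c : EReal) := by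
        apply add_le_add_left; exact EReal.coe_le_coe_iff.mpr h2
  _ ≤ ((ENNReal.ofReal (∫ Z, v Z ∂μ) : ℝ≥0∞) : EReal) + (c : EReal) := by
        apply add_le_add_left
        rw [EReal.coe_ennreal_ofReal]
        exact EReal.coe_le_coe_iff.mpr (le_max_left _ _)
  _ ≤ _ := by
        apply add_le_add_left
        rw [h1]
        exact EReal.coe_ennreal_le_coe_ennreal_iff.mpr (lintegral_mono hpt)

lemma ereal_le_of_forall {x y : EReal} (c : ℝ) (hyc : (c : EReal) ≤ y)
    (h : ∀ r : ℝ, c ≤ r → (r : EReal) < x → (r : EReal) ≤ y) : x ≤ y := by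
  rcases le_or_gt x c with hx | hx
  · exact le_trans hx hyc
  by_contra hxy
  push_neg at hxy
  have hyb : y ≠ ⊥ := fun hb => by rw [hb] at hyc; exact absurd hyc (by simp)
  have hyt : y ≠ ⊤ := fun ht => by rw [ht] at hxy; exact absurd hxy (by simp [lt_irrefl])
  lift y to ℝ using ⟨hyt, hyb⟩
  obtain ⟨z, hz1, hz2⟩ := EReal.exists_between_coe_real hxy
  have hcy : (c : ℝ) ≤ y := EReal.coe_le_coe_iff.mp hyc
  have := h z (le_of_lt (lt_of_le_of_lt hcy (EReal.coe_lt_coe_iff.mp hz1))) hz2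
  exact absurd (lt_of_le_of_lt this hz1) (lt_irrefl _)

end Aux
section JC

open Module

variable {m n : ℕ}

lemma lin_rep (L : (MinorIdx m n → ℝ) →L[ℝ] ℝ) (y : MinorIdx m n → ℝ) :
    L y = ∑ ι : MinorIdx m n, y ι * L (fun j => if ι = j then 1 else 0) := by
  conv_lhs => rw [pi_eq_sum_univ y, map_sum]
  congr 1
  ext ι
  rw [L.map_smul, smul_eq_mul]

lemma lin_comp_integrable (μ : Measure (Matrix (Fin m) (Fin n) ℝ))
    (hint : ∀ ι, Integrable (fun Z => minors Z ι) μ)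
    (L : (MinorIdx m n → ℝ) →L[ℝ] ℝ) :
    Integrable (fun Z => L (minors Z)) μ := by
  have : (fun Z => L (minors Z)) =
      fun Z => ∑ ι : MinorIdx m n, minors Z ι * L (fun j => if ι = j then 1 else 0) :=
    funext fun Z => lin_rep L (minors Z)
  rw [this]
  exact integrable_finset_sum _ fun ι _ => (hint ι).mul_const _

lemma lin_comp_integral (μ : Measure (Matrix (Fin m) (Fin n) ℝ))
    (hint : ∀ ι, Integrable (fun Z => minors Z ι) μ)
    (L : (MinorIdx m n → ℝ) →L[ℝ] ℝ) (q : MinorIdx m n → ℝ)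
    (hq : ∀ ι, (∫ Z, minors Z ι ∂μ) = q ι) :
    ∫ Z, L (minors Z) ∂μ = L q := by
  have : (fun Z => L (minors Z)) =
      fun Z => ∑ ι : MinorIdx m n, minors Z ι * L (fun j => if ι = j then 1 else 0) :=
    funext fun Z => lin_rep L (minors Z)
  rw [this, integral_finset_sum _ fun ι _ => (hint ι).mul_const _]
  rw [lin_rep L q]
  congr 1
  ext ι
  rw [integral_mul_const, hq]

lemma jc (μ : Measure (Matrix (Fin m) (Fin n) ℝ)) [IsProbabilityMeasure μ]
    (f : Matrix (Fin m) (Fin n) ℝ → EReal) (c : ℝ) (hfc : ∀ Z, (c : EReal) ≤ f Z)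
    (g : (MinorIdx m n → ℝ) → EReal)
    (hg : ∀ a b : MinorIdx m n → ℝ, ∀ lam : ℝ, 0 ≤ lam → lam ≤ 1 →
      g (lam • a + (1 - lam) • b) ≤ (lam : EReal) * g a + ((1 - lam : ℝ) : EReal) * g b)
    (hgc : ∀ y, (c : EReal) ≤ g y)
    (hgf : ∀ Z, g (minors Z) ≤ f Z)
    (hint : ∀ ι, Integrable (fun Z => minors Z ι) μ)
    (q : MinorIdx m n → ℝ) (hq : ∀ ι, (∫ Z, minors Z ι ∂μ) = q ι) :
    g q ≤ intE f c μ := by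
  classical
  -- the minimal submodule W₀ with p Z - q ∈ W₀ a.e.
  set S : Set ℕ := {k : ℕ | ∃ W : Submodule ℝ (MinorIdx m n → ℝ),
    μ {Z | minors Z - q ∈ W}ᶜ = 0 ∧ finrank ℝ W = k} with hSdef
  have hStop : finrank ℝ (⊤ : Submodule ℝ (MinorIdx m n → ℝ)) ∈ S := by
    refine ⟨⊤, ?_, rfl⟩
    simp
  obtain ⟨W₀, hW₀null, hW₀rk⟩ := Nat.sInf_mem (⟨_, hStop⟩ : S.Nonempty)
  have hmin : ∀ k ∈ S, sInf S ≤ k := fun k hk => Nat.sInf_le hk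
  set N : Set (Matrix (Fin m) (Fin n) ℝ) := {Z | minors Z - q ∈ W₀} with hNdef
  have hpmeas : Measurable (fun Z : Matrix (Fin m) (Fin n) ℝ => minors Z) :=
    measurable_pi_lambda _ fun ι => minors_measurable ι
  have hNmeas : MeasurableSet N := by
    have : N = (fun Z => minors Z - q) ⁻¹' (W₀ : Set (MinorIdx m n → ℝ)) := rfl
    rw [this]
    exact (W₀.closed_of_finiteDimensional.measurableSet).preimage (hpmeas.sub measurable_const)
  have hμN : μ N ≠ 0 := by
    intro h0
    have : (1 : ℝ≥0∞) ≤ 0 := by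
      calc (1 : ℝ≥0∞) = μ Set.univ := measure_univ.symm
      _ ≤ μ (N ∪ Nᶜ) := le_of_eq (by rw [Set.union_compl_self])
      _ ≤ μ N + μ Nᶜ := measure_union_le _ _
      _ = 0 := by rw [h0, hW₀null, add_zero]
    simp at this
  -- reduce to real lower bounds
  refine ereal_le_of_forall c (intE_ge f c μ) ?_
  intro r hcr hr
  -- the epigraph
  set epi : Set ((MinorIdx m n → ℝ) × ℝ) :=
    {yt | yt.1 - q ∈ W₀ ∧ g yt.1 ≤ (yt.2 : EReal)} with hepidef
  have hconvepi : Convex ℝ epi := by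
    rintro x ⟨hx1, hx2⟩ y ⟨hy1, hy2⟩ a b ha hb hab
    constructor
    · have : (a • x + b • y).1 - q = a • (x.1 - q) + b • (y.1 - q) := by
        simp only [Prod.fst_add, Prod.smul_fst]
        have : a • x.1 + b • y.1 - q = a • (x.1 - q) + b • (y.1 - q) + (a + b - 1) • q := by
          module
        rw [this, hab]
        simp
      rw [this]
      exact W₀.add_mem (W₀.smul_mem a hx1) (W₀.smul_mem b hy1)
    · have hcombo := hg x.1 y.1 a ha (by linarith)
      have hb' : (1 - a : ℝ) = b := by linarith
      rw [hb'] at hcombo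
      have h2 : (a : EReal) * g x.1 + (b : EReal) * g y.1 ≤
          (a : EReal) * (x.2 : EReal) + (b : EReal) * (y.2 : EReal) := by
        apply add_le_add
        · exact mul_le_mul_of_nonneg_left hx2 (by exact_mod_cast ha)
        · exact mul_le_mul_of_nonneg_left hy2 (by exact_mod_cast hb)
      have h3 : (a : EReal) * (x.2 : EReal) + (b : EReal) * (y.2 : EReal)
          = (((a • x + b • y).2 : ℝ) : EReal) := by
        simp only [Prod.snd_add, Prod.smul_snd, smul_eq_mul]
        rw [EReal.coe_add, EReal.coe_mul, EReal.coe_mul]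
      calc g ((a • x + b • y).1) = g (a • x.1 + b • y.1) := by
            simp only [Prod.fst_add, Prod.smul_fst]
      _ ≤ (a : EReal) * g x.1 + (b : EReal) * g y.1 := hcombo
      _ ≤ _ := h3 ▸ h2
  by_cases hepine : epi.Nonempty
  swap
  · -- epi empty : f = ⊤ on N
    have htop : ∀ Z ∈ N, f Z = ⊤ := by
      intro Z hZ
      have hgtop : g (minors Z) = ⊤ := by
        by_contra hne
        have hnb : g (minors Z) ≠ ⊥ := fun hb => by
          have := hgc (minors Z); rw [hb] at this; exact absurd this (by simp)
        exact hepine ⟨(minors Z, (g (minors Z)).toReal), hZ,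
          le_of_eq (EReal.coe_toReal hne hnb).symm⟩
      exact top_le_iff.mp (hgtop ▸ hgf Z)
    rw [intE_top f c μ hNmeas hμN htop]
    exact le_top
  -- separation
  have hx0 : ((q, r) : (MinorIdx m n → ℝ) × ℝ) ∉ epi := by
    rintro ⟨-, h2⟩
    exact absurd h2 (not_le.mpr hr)
  set T : Set ((MinorIdx m n → ℝ) × ℝ) := (fun w => w - (q, r)) '' epi with hTdef
  have hconvT : Convex ℝ T := by
    have h1 := hconvepi.translate (-(q, r))
    have heq : (fun w : (MinorIdx m n → ℝ) × ℝ => w - (q, r)) = (fun z => -(q, r) + z) :=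
      funext fun w => by rw [sub_eq_neg_add]
    rw [hTdef, heq]
    exact h1
  have hTne : T.Nonempty := hepine.image _
  have hT0 : (0 : (MinorIdx m n → ℝ) × ℝ) ∉ T := by
    rintro ⟨w, hw, hw0⟩
    rw [sub_eq_zero] at hw0
    exact hx0 (hw0 ▸ hw)
  obtain ⟨ψ, hψle, w₁', hw₁'mem, hw₁'lt⟩ :=
    ps0 (finrank ℝ ((MinorIdx m n → ℝ) × ℝ)) _ le_rfl T hconvT hTne hT0
  have hψ : ∀ w ∈ epi, ψ w ≤ ψ (q, r) := by
    intro w hw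
    have := hψle _ ⟨w, hw, rfl⟩
    rw [map_sub] at this
    linarith
  obtain ⟨w₁, hw₁mem, hw₁eq⟩ := hw₁'mem
  have hw₁lt : ψ w₁ < ψ (q, r) := by
    rw [← hw₁eq, map_sub] at hw₁'lt
    linarith
  set L : (MinorIdx m n → ℝ) →L[ℝ] ℝ := ψ.comp (ContinuousLinearMap.inl ℝ _ ℝ) with hLdef
  set β : ℝ := ψ (0, 1) with hβdef
  have hdecomp : ∀ (y : MinorIdx m n → ℝ) (t : ℝ), ψ (y, t) = L y + t * β := by
    intro y t
    have h1 : ((y, t) : (MinorIdx m n → ℝ) × ℝ) = (y, 0) + t • (0, 1) := by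
      simp [Prod.ext_iff]
    rw [h1, map_add, ψ.map_smul, smul_eq_mul]
    rfl
  have hβ : β ≤ 0 := by
    by_contra hβpos
    push_neg at hβpos
    obtain ⟨w₀, hw₀⟩ := hepine
    set k : ℝ := max 0 ((ψ (q, r) - ψ w₀) / β + 1) with hkdef
    have hk0 : 0 ≤ k := le_max_left _ _
    have hmem : ((w₀.1, w₀.2 + k) : (MinorIdx m n → ℝ) × ℝ) ∈ epi := by
      refine ⟨hw₀.1, le_trans hw₀.2 ?_⟩
      have h2 : (w₀.2 : ℝ) ≤ w₀.2 + k := by linarith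
      exact EReal.coe_le_coe_iff.mpr h2
    have hle := hψ _ hmem
    have h2 : ψ w₀ = L w₀.1 + w₀.2 * β := hdecomp w₀.1 w₀.2
    have hexp : ψ (w₀.1, w₀.2 + k) = ψ w₀ + k * β := by
      rw [hdecomp, h2]; ring
    rw [hexp] at hle
    have hkb : ((ψ (q, r) - ψ w₀) / β + 1) * β ≤ k * β :=
      mul_le_mul_of_nonneg_right (le_max_right _ _) hβpos.le
    rw [add_mul, div_mul_cancel₀ _ (ne_of_gt hβpos)] at hkb
    linarith
  rcases hβ.lt_or_eq with hblt | hbeq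
  · -- β < 0 : affine minorant
    set lf : (MinorIdx m n → ℝ) → ℝ := fun y => (L y - L q) / (-β) + r with hlfdef
    have hlq : lf q = r := by simp [hlfdef]
    have hlle : ∀ y, y - q ∈ W₀ → ((lf y : ℝ) : EReal) ≤ g y := by
      intro y hy
      rcases eq_top_or_lt_top (g y) with htop | hlt
      · rw [htop]; exact le_top
      have hnb : g y ≠ ⊥ := fun hb => by
        have := hgc y; rw [hb] at this; exact absurd this (by simp)
      have heq : g y = ((g y).toReal : EReal) := (EReal.coe_toReal (ne_of_lt hlt) hnb).symm
      have hmem : ((y, (g y).toReal) : (MinorIdx m n → ℝ) × ℝ) ∈ epi := ⟨hy, le_of_eq heq⟩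
      have := hψ _ hmem
      rw [hdecomp, hdecomp] at this
      have hβ' : 0 < -β := by linarith
      have : lf y ≤ (g y).toReal := by
        rw [hlfdef]
        have hdiv : (L y - L q) / (-β) ≤ (g y).toReal - r := by
          rw [div_le_iff₀ hβ']
          nlinarith
        linarith
      rw [heq]
      exact_mod_cast EReal.coe_le_coe_iff.mpr this
    -- integrate the affine minorant
    have hLint : Integrable (fun Z => L (minors Z)) μ := lin_comp_integrable μ hint L
    have hlfint : Integrable (fun Z => lf (minors Z)) μ := by
      rw [hlfdef]
      exact (((hLint.sub (integrable_const _)).div_const _).add (integrable_const _))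
    set w : Matrix (Fin m) (Fin n) ℝ → ℝ :=
      fun Z => N.indicator (fun Z => lf (minors Z) - c) Z + c with hwdef
    have hwint : Integrable w μ :=
      ((hlfint.sub (integrable_const c)).indicator hNmeas).add (integrable_const c)
    have hwf : ∀ Z, ((w Z : ℝ) : EReal) ≤ f Z := by
      intro Z
      by_cases hZ : Z ∈ N
      · have : w Z = lf (minors Z) := by
          rw [hwdef]; simp only [Set.indicator_of_mem hZ]; ring
        rw [this]
        exact le_trans (hlle (minors Z) hZ) (hgf Z)
      · have : w Z = c := by
          rw [hwdef]; simp only [Set.indicator_of_notMem hZ]; ring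
        rw [this]
        exact hfc Z
    have hweq : ∫ Z, w Z ∂μ = r := by
      have hcongr : w =ᵐ[μ] fun Z => lf (minors Z) := by
        have : ∀ Z ∈ Nᶜᶜ, w Z = lf (minors Z) := by
          intro Z hZ
          rw [compl_compl] at hZ
          rw [hwdef]; simp only [Set.indicator_of_mem hZ]; ring
        exact (ae_iff.mpr (by
          apply measure_mono_null _ hW₀null
          intro Z hZ
          simp only [Set.mem_setOf_eq] at hZ ⊢
          by_contra hmem
          exact hZ (by
            rw [hwdef]; simp only [Set.indicator_of_mem (not_not.mp hmem)]; ring)))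
      rw [integral_congr_ae hcongr]
      have heval : ∫ Z, lf (minors Z) ∂μ
          = (∫ Z, L (minors Z) ∂μ - L q) / (-β) + r := by
        have hi1 : Integrable (fun Z => (L (minors Z) - L q) / -β) μ :=
          (hLint.sub (integrable_const _)).div_const _
        rw [hlfdef]
        rw [integral_add hi1 (integrable_const r), integral_div,
          integral_sub hLint (integrable_const _), integral_const, probReal_univ]
        simp
      rw [heval, lin_comp_integral μ hint L q hq]
      simp
    have := aff_bound μ f c hfc w hwint hwf
    rw [hweq] at this
    exact this
  · -- β = 0 : mass forced onto a smaller flat, or positive mass where f = ⊤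
    have hψL : ∀ w ∈ epi, L w.1 ≤ L q := by
      intro w hw
      have := hψ w hw
      rw [show w = (w.1, w.2) from rfl, hdecomp, hdecomp, hbeq] at this
      simpa using this
    have hw₁L : L w₁.1 < L q := by
      have := hw₁lt
      rw [show w₁ = (w₁.1, w₁.2) from rfl, hdecomp, hdecomp, hbeq] at this
      simpa using this
    set A : Set (Matrix (Fin m) (Fin n) ℝ) := N ∩ {Z | L q < L (minors Z)} with hAdef
    have hAmeas : MeasurableSet A :=
      hNmeas.inter (measurableSet_lt measurable_const (L.continuous.measurable.comp hpmeas))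
    by_cases hA : μ A = 0
    · -- a.e. L (p Z) = L q, so W₀ ⊓ ker L contradicts minimality
      have hLint : Integrable (fun Z => L (minors Z)) μ := lin_comp_integrable μ hint L
      have haele : ∀ᵐ Z ∂μ, L (minors Z) ≤ L q := by
        have hnull : μ (A ∪ Nᶜ) = 0 := measure_union_null hA hW₀null
        refine ae_iff.mpr (measure_mono_null ?_ hnull)
        intro Z hZ
        simp only [Set.mem_setOf_eq] at hZ
        by_cases hZN : Z ∈ N
        · exact Or.inl ⟨hZN, not_le.mp hZ⟩
        · exact Or.inr hZN
      have hint2 : Integrable (fun Z => L q - L (minors Z)) μ := (integrable_const _).sub hLint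
      have hzero : ∫ Z, (L q - L (minors Z)) ∂μ = 0 := by
        rw [integral_sub (integrable_const _) hLint, lin_comp_integral μ hint L q hq,
          integral_const, probReal_univ]
        simp
      have haeeq : (fun Z => L q - L (minors Z)) =ᵐ[μ] 0 :=
        (integral_eq_zero_iff_of_nonneg_ae (haele.mono fun Z hZ => by simpa using hZ)
          hint2).mp hzero
      have haeeq' : ∀ᵐ Z ∂μ, L (minors Z) = L q := haeeq.mono fun Z hZ => by
        have h := hZ
        simp only [Pi.zero_apply] at h
        linarith
      set W₁ : Submodule ℝ (MinorIdx m n → ℝ) := W₀ ⊓ LinearMap.ker (L : _ →ₗ[ℝ] ℝ) with hW₁def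
      have hW₁null : μ {Z | minors Z - q ∈ W₁}ᶜ = 0 := by
        have hsub : {Z | minors Z - q ∈ W₁}ᶜ ⊆ Nᶜ ∪ {Z | ¬ L (minors Z) = L q} := by
          intro Z hZ
          simp only [Set.mem_compl_iff, Set.mem_setOf_eq, hW₁def, Submodule.mem_inf,
            not_and_or] at hZ
          rcases hZ with h | h
          · exact Or.inl h
          · refine Or.inr ?_
            simp only [Set.mem_setOf_eq]
            intro heq
            exact h (by
              simp only [LinearMap.mem_ker, ContinuousLinearMap.coe_coe, map_sub, heq, sub_self])
        refine measure_mono_null hsub (measure_union_null hW₀null ?_)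
        exact ae_iff.mp haeeq'
      have hmem1 : finrank ℝ W₁ ∈ S := ⟨W₁, hW₁null, rfl⟩
      have hle1 : finrank ℝ W₀ ≤ finrank ℝ W₁ := hW₀rk ▸ hmin _ hmem1
      have hW₁W₀ : W₁ ≤ W₀ := inf_le_left
      have hWeq : W₁ = W₀ := Submodule.eq_of_le_of_finrank_le hW₁W₀ hle1
      have hker : W₀ ≤ LinearMap.ker (L : _ →ₗ[ℝ] ℝ) := hWeq ▸ inf_le_right
      have := hker hw₁mem.1
      simp only [LinearMap.mem_ker, ContinuousLinearMap.coe_coe, map_sub, sub_eq_zero] at this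
      rw [this] at hw₁L
      exact absurd hw₁L (lt_irrefl _)
    · -- positive mass where g∘p = ⊤, so intE = ⊤ : contradicts nothing... gives r ≤ ⊤ directly
      have htop : ∀ Z ∈ A, f Z = ⊤ := by
        rintro Z ⟨hZN, hZL⟩
        have hgtop : g (minors Z) = ⊤ := by
          by_contra hne
          have hnb : g (minors Z) ≠ ⊥ := fun hb => by
            have := hgc (minors Z); rw [hb] at this; exact absurd this (by simp)
          have hmem : ((minors Z, (g (minors Z)).toReal) : (MinorIdx m n → ℝ) × ℝ) ∈ epi :=
            ⟨hZN, le_of_eq (EReal.coe_toReal hne hnb).symm⟩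
          have := hψL _ hmem
          simp only at this
          exact absurd hZL (not_lt.mpr this)
        exact top_le_iff.mp (hgtop ▸ hgf Z)
      rw [intE_top f c μ hAmeas hA htop]
      exact le_top
  
end JC
section Final

instance matSingleton (m n : ℕ) : MeasurableSingletonClass (Matrix (Fin m) (Fin n) ℝ) :=
  inferInstanceAs (MeasurableSingletonClass (Fin m → Fin n → ℝ))

variable {m n : ℕ}

lemma coe_ennreal_ne_top_eq (x : ℝ≥0∞) (hx : x ≠ ⊤) :
    ((x : EReal)) = ((x.toReal : ℝ) : EReal) := by
  have h1 : (x : EReal) ≠ ⊤ := by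
    simp [EReal.coe_ennreal_eq_top_iff, hx]
  have h2 : (x : EReal) ≠ ⊥ := by
    intro h
    have := EReal.coe_ennreal_nonneg x
    rw [h] at this
    exact absurd this (by simp)
  rw [← EReal.coe_toReal h1 h2, EReal.toReal_coe_ennreal]

lemma intE_dirac (f : Matrix (Fin m) (Fin n) ℝ → EReal) (c : ℝ)
    (hc : ∀ Z, (c : EReal) ≤ f Z) (X : Matrix (Fin m) (Fin n) ℝ) :
    intE f c (MeasureTheory.Measure.dirac X) = f X := by
  rw [intE, MeasureTheory.lintegral_dirac]
  have h1 := hc X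
  generalize hfx : f X = t at h1 ⊢
  induction t using EReal.rec with
  | bot => exact absurd h1 (by simp)
  | top => rw [EReal.top_sub_coe, er2e_top, EReal.coe_ennreal_top, EReal.top_add_coe]
  | coe x =>
    have hcx : c ≤ x := EReal.coe_le_coe_iff.mp h1
    rw [show (x : EReal) - (c : EReal) = ((x - c : ℝ) : EReal) from (EReal.coe_sub x c).symm,
      er2e_coe, EReal.coe_ennreal_ofReal, max_eq_left (by linarith : (0:ℝ) ≤ x - c),
      ← EReal.coe_add]
    norm_num

lemma psiF_le_f (f : Matrix (Fin m) (Fin n) ℝ → EReal) (c : ℝ)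
    (hc : ∀ Z, (c : EReal) ≤ f Z) (X : Matrix (Fin m) (Fin n) ℝ) :
    psiF f c (minors X) ≤ f X := by
  have hmem : f X ∈ {v : EReal | ∃ μ : MeasureTheory.Measure (Matrix (Fin m) (Fin n) ℝ),
      MeasureTheory.IsProbabilityMeasure μ ∧
      (∀ ι, MeasureTheory.Integrable (fun Z => minors Z ι) μ) ∧
      (∀ ι, (∫ Z, minors Z ι ∂μ) = minors X ι) ∧
      v = intE f c μ} := by
    refine ⟨MeasureTheory.Measure.dirac X, inferInstance, ?_, ?_, (intE_dirac f c hc X).symm⟩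
    · intro ι
      constructor
      · exact (minors_measurable ι).aestronglyMeasurable
      · simp [MeasureTheory.HasFiniteIntegral, MeasureTheory.lintegral_dirac]
    · intro ι
      exact MeasureTheory.integral_dirac _ X
  exact sInf_le hmem

lemma psiF_ge (f : Matrix (Fin m) (Fin n) ℝ → EReal) (c : ℝ) (q : MinorIdx m n → ℝ) :
    (c : EReal) ≤ psiF f c q := by
  apply le_sInf
  rintro v ⟨μ, hμ, -, -, rfl⟩
  exact intE_ge f c μ

/-- every polyconvex minorant of `f` is dominated by `psiF` -/
lemma poly_le (f : Matrix (Fin m) (Fin n) ℝ → EReal) (c : ℝ)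
    (hc : ∀ Z, (c : EReal) ≤ f Z)
    (g : (MinorIdx m n → ℝ) → EReal)
    (hg : ∀ a b : MinorIdx m n → ℝ, ∀ lam : ℝ, 0 ≤ lam → lam ≤ 1 →
      g (lam • a + (1 - lam) • b) ≤ (lam : EReal) * g a + ((1 - lam : ℝ) : EReal) * g b)
    (hgf : ∀ Z, g (minors Z) ≤ f Z) (X : Matrix (Fin m) (Fin n) ℝ) :
    g (minors X) ≤ psiF f c (minors X) := by
  -- truncate g from below by c
  set g' : (MinorIdx m n → ℝ) → EReal := fun y => max (g y) (c : EReal) with hg'def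
  have hg'conv : ∀ a b : MinorIdx m n → ℝ, ∀ lam : ℝ, 0 ≤ lam → lam ≤ 1 →
      g' (lam • a + (1 - lam) • b) ≤ (lam : EReal) * g' a + ((1 - lam : ℝ) : EReal) * g' b := by
    intro a b lam h0 h1
    apply max_le
    · calc g (lam • a + (1 - lam) • b) ≤ (lam : EReal) * g a + ((1 - lam : ℝ) : EReal) * g b :=
            hg a b lam h0 h1
      _ ≤ _ := add_le_add
            (mul_le_mul_of_nonneg_left (le_max_left _ _) (by exact_mod_cast h0))
            (mul_le_mul_of_nonneg_left (le_max_left _ _) (by exact_mod_cast (by linarith : (0:ℝ) ≤ 1 - lam)))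
    · calc (c : EReal) = ((lam * c + (1 - lam) * c : ℝ) : EReal) := by
            rw [show lam * c + (1 - lam) * c = c by ring]
      _ = (lam : EReal) * (c : EReal) + ((1 - lam : ℝ) : EReal) * (c : EReal) := by
            rw [EReal.coe_add, EReal.coe_mul, EReal.coe_mul]
      _ ≤ _ := add_le_add
            (mul_le_mul_of_nonneg_left (le_max_right _ _) (by exact_mod_cast h0))
            (mul_le_mul_of_nonneg_left (le_max_right _ _) (by exact_mod_cast (by linarith : (0:ℝ) ≤ 1 - lam)))
  have hg'c : ∀ y, (c : EReal) ≤ g' y := fun y => le_max_right _ _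
  have hg'f : ∀ Z, g' (minors Z) ≤ f Z := fun Z => max_le (hgf Z) (hc Z)
  calc g (minors X) ≤ g' (minors X) := le_max_left _ _
  _ ≤ psiF f c (minors X) := by
      apply le_sInf
      rintro v ⟨μ, hμ, hint, hq, rfl⟩
      exact jc μ f c hc g' hg'conv hg'c hg'f hint (minors X) hq

lemma ereal_le_of_forall_eps {x : EReal} {y : ℝ}
    (h : ∀ ε : ℝ, 0 < ε → x ≤ ((y + ε : ℝ) : EReal)) : x ≤ (y : EReal) := by
  by_contra hxy
  push_neg at hxy
  obtain ⟨z, hz1, hz2⟩ := EReal.exists_between_coe_real hxy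
  have hzy : y < z := EReal.coe_lt_coe_iff.mp hz1
  have := h (z - y) (by linarith)
  rw [show y + (z - y) = z by ring] at this
  exact absurd (lt_of_le_of_lt this hz2) (lt_irrefl _)

lemma ereal_mul_add_real (l : ℝ) (hl : 0 < l) (x : ℝ≥0∞) (c : ℝ) :
    (l : EReal) * ((x : EReal) + (c : EReal)) = (l : EReal) * (x : EReal) + ((l * c : ℝ) : EReal) := by
  have hlE : (0 : EReal) < (l : EReal) := EReal.coe_pos.mpr hl
  rcases eq_or_ne x ⊤ with hx | hx
  · rw [hx, EReal.coe_ennreal_top, EReal.top_add_coe, EReal.mul_top_of_pos hlE,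
      EReal.top_add_coe]
  · rw [coe_ennreal_ne_top_eq x hx, ← EReal.coe_add, ← EReal.coe_mul, ← EReal.coe_mul,
      ← EReal.coe_add]
    exact EReal.coe_eq_coe_iff.mpr (by ring)

/-- combination bound for `psiF` with `0 < lam < 1` -/
lemma psiF_combo (f : Matrix (Fin m) (Fin n) ℝ → EReal) (c : ℝ)
    (a b : MinorIdx m n → ℝ) (lam : ℝ) (h0 : 0 < lam) (h1 : lam < 1)
    (μ₁ μ₂ : MeasureTheory.Measure (Matrix (Fin m) (Fin n) ℝ))
    (hp₁ : MeasureTheory.IsProbabilityMeasure μ₁) (hp₂ : MeasureTheory.IsProbabilityMeasure μ₂)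
    (hint₁ : ∀ ι, MeasureTheory.Integrable (fun Z => minors Z ι) μ₁)
    (hint₂ : ∀ ι, MeasureTheory.Integrable (fun Z => minors Z ι) μ₂)
    (hq₁ : ∀ ι, (∫ Z, minors Z ι ∂μ₁) = a ι) (hq₂ : ∀ ι, (∫ Z, minors Z ι ∂μ₂) = b ι) :
    psiF f c (lam • a + (1 - lam) • b) ≤
      (lam : EReal) * intE f c μ₁ + ((1 - lam : ℝ) : EReal) * intE f c μ₂ := by
  classical
  set μ : MeasureTheory.Measure (Matrix (Fin m) (Fin n) ℝ) :=
    (ENNReal.ofReal lam) • μ₁ + (ENNReal.ofReal (1 - lam)) • μ₂ with hμdef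
  have hprob : MeasureTheory.IsProbabilityMeasure μ := by
    constructor
    rw [hμdef]
    simp only [MeasureTheory.Measure.add_apply, MeasureTheory.Measure.smul_apply,
      MeasureTheory.measure_univ, smul_eq_mul, mul_one]
    rw [← ENNReal.ofReal_add h0.le (by linarith)]
    norm_num
  have hint : ∀ ι, MeasureTheory.Integrable (fun Z => minors Z ι) μ := by
    intro ι
    exact ((hint₁ ι).smul_measure ENNReal.ofReal_ne_top).add_measure
      ((hint₂ ι).smul_measure ENNReal.ofReal_ne_top)
  have hq : ∀ ι, (∫ Z, minors Z ι ∂μ) = (lam • a + (1 - lam) • b) ι := by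
    intro ι
    rw [hμdef, MeasureTheory.integral_add_measure ((hint₁ ι).smul_measure ENNReal.ofReal_ne_top)
      ((hint₂ ι).smul_measure ENNReal.ofReal_ne_top),
      MeasureTheory.integral_smul_measure, MeasureTheory.integral_smul_measure,
      ENNReal.toReal_ofReal h0.le, ENNReal.toReal_ofReal (by linarith : (0:ℝ) ≤ 1 - lam),
      hq₁, hq₂]
    simp [smul_eq_mul]
  have hle : psiF f c (lam • a + (1 - lam) • b) ≤ intE f c μ :=
    sInf_le ⟨μ, hprob, hint, hq, rfl⟩
  refine le_trans hle (le_of_eq ?_)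
  -- compute intE f c μ
  rw [intE, intE, intE, hμdef, MeasureTheory.lintegral_add_measure,
    MeasureTheory.lintegral_smul_measure, MeasureTheory.lintegral_smul_measure]
  set I₁ := ∫⁻ Z, er2e (f Z - (c : EReal)) ∂μ₁ with hI₁
  set I₂ := ∫⁻ Z, er2e (f Z - (c : EReal)) ∂μ₂ with hI₂
  rw [smul_eq_mul, smul_eq_mul, EReal.coe_ennreal_add, EReal.coe_ennreal_mul, EReal.coe_ennreal_mul,
    EReal.coe_ennreal_ofReal, EReal.coe_ennreal_ofReal,
    max_eq_left h0.le, max_eq_left (by linarith : (0:ℝ) ≤ 1 - lam)]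
  rw [ereal_mul_add_real lam h0 I₁ c, ereal_mul_add_real (1 - lam) (by linarith) I₂ c]
  have hcc : ((lam * c : ℝ) : EReal) + (((1 - lam) * c : ℝ) : EReal) = (c : EReal) := by
    rw [← EReal.coe_add]
    exact EReal.coe_eq_coe_iff.mpr (by ring)
  calc (lam : EReal) * (I₁ : EReal) + ((1 - lam : ℝ) : EReal) * (I₂ : EReal) + (c : EReal)
      = (lam : EReal) * (I₁ : EReal) + ((1 - lam : ℝ) : EReal) * (I₂ : EReal)
        + (((lam * c : ℝ) : EReal) + (((1 - lam) * c : ℝ) : EReal)) := by rw [hcc]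
  _ = ((lam : EReal) * (I₁ : EReal) + ((lam * c : ℝ) : EReal))
        + (((1 - lam : ℝ) : EReal) * (I₂ : EReal) + (((1 - lam) * c : ℝ) : EReal)) := by
      abel
  _ = _ := rfl

end Final
section Conv

variable {m n : ℕ}

lemma ereal_ne_bot_of_ge_coe {x : EReal} {c : ℝ} (h : (c : EReal) ≤ x) : x ≠ ⊥ := by
  intro hb
  rw [hb] at h
  exact absurd h (by simp)

lemma psiF_conv (f : Matrix (Fin m) (Fin n) ℝ → EReal) (c : ℝ) :
    ∀ a b : MinorIdx m n → ℝ, ∀ lam : ℝ, 0 ≤ lam → lam ≤ 1 →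
      psiF f c (lam • a + (1 - lam) • b) ≤
        (lam : EReal) * psiF f c a + ((1 - lam : ℝ) : EReal) * psiF f c b := by
  intro a b lam h0 h1
  rcases eq_or_lt_of_le h0 with h0' | h0'
  · -- lam = 0
    have hcombo : lam • a + (1 - lam) • b = b := by
      rw [← h0']; simp
    rw [hcombo, ← h0']
    norm_num
  rcases eq_or_lt_of_le h1 with h1' | h1'
  · -- lam = 1
    have hcombo : lam • a + (1 - lam) • b = a := by
      rw [h1']; simp
    rw [hcombo, h1']
    norm_num
  -- 0 < lam < 1
  have hl1 : (0:ℝ) < 1 - lam := by linarith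
  have hga : (c : EReal) ≤ psiF f c a := psiF_ge f c a
  have hgb : (c : EReal) ≤ psiF f c b := psiF_ge f c b
  have hlam_pos : (0 : EReal) < (lam : EReal) := EReal.coe_pos.mpr h0'
  have hlam1_pos : (0 : EReal) < ((1 - lam : ℝ) : EReal) := EReal.coe_pos.mpr hl1
  have hnb2 : ((1 - lam : ℝ) : EReal) * psiF f c b ≠ ⊥ := by
    rcases eq_or_ne (psiF f c b) ⊤ with htb | htb
    · rw [htb, EReal.mul_top_of_pos hlam1_pos]; simp
    · rw [← EReal.coe_toReal htb (ereal_ne_bot_of_ge_coe hgb), ← EReal.coe_mul]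
      exact EReal.coe_ne_bot _
  have hnb1 : (lam : EReal) * psiF f c a ≠ ⊥ := by
    rcases eq_or_ne (psiF f c a) ⊤ with hta | hta
    · rw [hta, EReal.mul_top_of_pos hlam_pos]; simp
    · rw [← EReal.coe_toReal hta (ereal_ne_bot_of_ge_coe hga), ← EReal.coe_mul]
      exact EReal.coe_ne_bot _
  rcases eq_or_ne (psiF f c a) ⊤ with hta | hta
  · rw [hta, EReal.mul_top_of_pos hlam_pos, EReal.top_add_of_ne_bot hnb2]
    exact le_top
  rcases eq_or_ne (psiF f c b) ⊤ with htb | htb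
  · rw [htb, EReal.mul_top_of_pos hlam1_pos, EReal.add_top_of_ne_bot hnb1]
    exact le_top
  -- both finite
  set α : ℝ := (psiF f c a).toReal with hαdef
  set β : ℝ := (psiF f c b).toReal with hβdef
  have hαeq : psiF f c a = (α : EReal) := (EReal.coe_toReal hta (ereal_ne_bot_of_ge_coe hga)).symm
  have hβeq : psiF f c b = (β : EReal) := (EReal.coe_toReal htb (ereal_ne_bot_of_ge_coe hgb)).symm
  rw [hαeq, hβeq, ← EReal.coe_mul, ← EReal.coe_mul, ← EReal.coe_add]
  apply ereal_le_of_forall_eps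
  intro ε hε
  have hlta : psiF f c a < ((α + ε : ℝ) : EReal) := by
    rw [hαeq]; exact EReal.coe_lt_coe_iff.mpr (by linarith)
  have hltb : psiF f c b < ((β + ε : ℝ) : EReal) := by
    rw [hβeq]; exact EReal.coe_lt_coe_iff.mpr (by linarith)
  obtain ⟨v₁, hv₁S, hv₁lt⟩ := sInf_lt_iff.mp hlta
  obtain ⟨v₂, hv₂S, hv₂lt⟩ := sInf_lt_iff.mp hltb
  obtain ⟨μ₁, hp₁, hi₁, hq₁, rfl⟩ := hv₁S
  obtain ⟨μ₂, hp₂, hi₂, hq₂, rfl⟩ := hv₂S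
  calc psiF f c (lam • a + (1 - lam) • b)
      ≤ (lam : EReal) * intE f c μ₁ + ((1 - lam : ℝ) : EReal) * intE f c μ₂ :=
        psiF_combo f c a b lam h0' h1' μ₁ μ₂ hp₁ hp₂ hi₁ hi₂ hq₁ hq₂
  _ ≤ (lam : EReal) * ((α + ε : ℝ) : EReal) + ((1 - lam : ℝ) : EReal) * ((β + ε : ℝ) : EReal) :=
        add_le_add (mul_le_mul_of_nonneg_left hv₁lt.le (le_of_lt hlam_pos))
          (mul_le_mul_of_nonneg_left hv₂lt.le (le_of_lt hlam1_pos))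
  _ = ((lam * α + (1 - lam) * β + ε : ℝ) : EReal) := by
        rw [← EReal.coe_mul, ← EReal.coe_mul, ← EReal.coe_add]
        exact EReal.coe_eq_coe_iff.mpr (by ring)

end Conv

/-- `φ(X) = inf {∫ f dμ : ∫ p dμ = p(X)}` satisfies `φ ≤ f`, dominates every
polyconvex lower bound `h = g ∘ p ≤ f` of `f`, and hence equals the polyconvex
envelope of `f` (the pointwise sup of all polyconvex lower bounds). -/
theorem stmt11 (m n : ℕ) (hm : 1 ≤ m) (hn : 1 ≤ n)
    (f : Matrix (Fin m) (Fin n) ℝ → EReal)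
    (c : ℝ) (hc : ∀ Z, (c : EReal) ≤ f Z)
    (X : Matrix (Fin m) (Fin n) ℝ) :
    psiF f c (minors X) ≤ f X
    ∧ (∀ (h : Matrix (Fin m) (Fin n) ℝ → EReal) (g : (MinorIdx m n → ℝ) → EReal),
        (∀ a b : MinorIdx m n → ℝ, ∀ lam : ℝ, 0 ≤ lam → lam ≤ 1 →
          g (lam • a + (1 - lam) • b) ≤ (lam : EReal) * g a + ((1 - lam : ℝ) : EReal) * g b) →
        (∀ Z, h Z = g (minors Z)) →
        (∀ Z, h Z ≤ f Z) →
        h X ≤ psiF f c (minors X))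
    ∧ psiF f c (minors X) =
        sSup {v : EReal | ∃ g : (MinorIdx m n → ℝ) → EReal,
          (∀ a b : MinorIdx m n → ℝ, ∀ lam : ℝ, 0 ≤ lam → lam ≤ 1 →
            g (lam • a + (1 - lam) • b) ≤ (lam : EReal) * g a + ((1 - lam : ℝ) : EReal) * g b) ∧
          (∀ Z, g (minors Z) ≤ f Z) ∧
          v = g (minors X)} := by
  refine ⟨psiF_le_f f c hc X, ?_, ?_⟩
  · intro h g hgconv hhg hhf
    rw [hhg X]
    exact poly_le f c hc g hgconv (fun Z => (hhg Z) ▸ hhf Z) X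
  · apply le_antisymm
    · exact le_sSup ⟨fun q => psiF f c q, psiF_conv f c,
        fun Z => psiF_le_f f c hc Z, rfl⟩
    · apply sSup_le
      rintro v ⟨g, hgconv, hgle, rfl⟩
      exact poly_le f c hc g hgconv hgle X
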